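/- Consider a commutative diagram of abelian groups with exact rows A → B → C → D and A' → B' → C' → D', and vertical homomorphisms a : A → A', b : B → B', c : C → C', d : D → D' making the diagram commute. If the cokernel of a, the cokernel of c, and the kernel of d are all finite, then the cokernel of b is finite. -/
import Mathlib

/-- If a group `G` admits a map to a finite type whose fibers are contained in
translates of a finite set, then `G` is finite. -/
lemma aux_finite_of_fibers {G X : Type*} [AddGroup G] [Finite X] (f : G → X) (S : Set G)
    (hS : S.Finite) (hf : ∀ g₁ g₂, f g₁ = f g₂ → g₁ - g₂ ∈ S) : Finite G := by
  have hfib : ∀ x : X, Finite {g // f g = x} := by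
    intro x
    rcases isEmpty_or_nonempty {g // f g = x} with he | ⟨⟨g₀, hg₀⟩⟩
    · infer_instance
    · haveI := hS.to_subtype
      refine Finite.of_injective
        (fun g => (⟨g.1 - g₀, hf _ _ (g.2.trans hg₀.symm)⟩ : S)) ?_
      intro g₁ g₂ hgg
      have : g₁.1 - g₀ = g₂.1 - g₀ := congrArg Subtype.val hgg
      exact Subtype.ext (sub_left_injective this)
  exact Finite.of_equiv _ (Equiv.sigmaFiberEquiv f)

/-- Four-lemma style finiteness statement: given a commutative diagram of abelian groups
with exact rows `A → B → C → D` and `A' → B' → C' → D'` and vertical maps `a, b, c, d`,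
if `coker a`, `coker c` and `ker d` are finite, then `coker b` is finite. -/
theorem coker_finite_of_four_lemma {A B C D A' B' C' D' : Type*}
    [AddCommGroup A] [AddCommGroup B] [AddCommGroup C] [AddCommGroup D]
    [AddCommGroup A'] [AddCommGroup B'] [AddCommGroup C'] [AddCommGroup D']
    (f : A →+ B) (g : B →+ C) (h : C →+ D)
    (f' : A' →+ B') (g' : B' →+ C') (h' : C' →+ D')
    (a : A →+ A') (b : B →+ B') (c : C →+ C') (d : D →+ D')
    (comm₁ : ∀ x : A, b (f x) = f' (a x))
    (comm₂ : ∀ x : B, c (g x) = g' (b x))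
    (comm₃ : ∀ x : C, d (h x) = h' (c x))
    (hexB : Function.Exact ⇑f ⇑g) (hexC : Function.Exact ⇑g ⇑h)
    (hexB' : Function.Exact ⇑f' ⇑g') (hexC' : Function.Exact ⇑g' ⇑h')
    (hcoka : Finite (A' ⧸ a.range)) (hcokc : Finite (C' ⧸ c.range))
    (hkerd : Finite d.ker) :
    Finite (B' ⧸ b.range) := by
  classical
  -- induced map on cokernels B'/im b → C'/im c
  have hmb : b.range ≤ c.range.comap g' := by
    rintro _ ⟨y, rfl⟩
    exact ⟨g y, comm₂ y⟩
  have hma : a.range ≤ b.range.comap f' := by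
    rintro _ ⟨x, rfl⟩
    exact ⟨f x, comm₁ x⟩
  let φ : (B' ⧸ b.range) →+ (C' ⧸ c.range) := QuotientAddGroup.map _ _ g' hmb
  let ι : (A' ⧸ a.range) →+ (B' ⧸ b.range) := QuotientAddGroup.map _ _ f' hma
  -- Step 1: the kernel of φ is finite
  have hrangefin : (Set.range ι).Finite := Set.finite_range ι
  have hSfin : ({k : φ.ker | (k : B' ⧸ b.range) ∈ Set.range ι} : Set φ.ker).Finite := by
    have : ({k : φ.ker | (k : B' ⧸ b.range) ∈ Set.range ι} : Set φ.ker)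
        = (fun k : φ.ker => (k : B' ⧸ b.range)) ⁻¹' (Set.range ι) := rfl
    rw [this]
    exact hrangefin.preimage (Subtype.val_injective.injOn)
  -- for each k in ker φ, pick a preimage in C of g' of the chosen representative
  have hx : ∀ k : φ.ker, ∃ x : C, c x = g' ((k : B' ⧸ b.range).out) := by
    intro k
    have h0 : φ ((k : B' ⧸ b.range)) = 0 := k.2
    have hout : QuotientAddGroup.mk ((k : B' ⧸ b.range).out) = (k : B' ⧸ b.range) :=
      QuotientAddGroup.out_eq' _
    rw [← hout] at h0
    have : QuotientAddGroup.mk (g' ((k : B' ⧸ b.range).out)) = (0 : C' ⧸ c.range) := h0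
    rw [QuotientAddGroup.eq_zero_iff] at this
    obtain ⟨x, hx⟩ := this
    exact ⟨x, hx⟩
  -- the connecting function to ker d
  have hθmem : ∀ k : φ.ker, h (Classical.choose (hx k)) ∈ d.ker := by
    intro k
    have hc : c (Classical.choose (hx k)) = g' ((k : B' ⧸ b.range).out) :=
      Classical.choose_spec (hx k)
    have : d (h (Classical.choose (hx k))) = h' (c (Classical.choose (hx k))) := comm₃ _
    rw [hc] at this
    simpa [this] using hexC'.apply_apply_eq_zero ((k : B' ⧸ b.range).out)
  let θ : φ.ker → d.ker := fun k => ⟨h (Classical.choose (hx k)), hθmem k⟩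
  have hkerφ : Finite φ.ker := by
    refine aux_finite_of_fibers θ _ hSfin ?_
    intro k₁ k₂ hk
    set x₁ := Classical.choose (hx k₁) with hx₁def
    set x₂ := Classical.choose (hx k₂) with hx₂def
    have hc₁ : c x₁ = g' ((k₁ : B' ⧸ b.range).out) := Classical.choose_spec (hx k₁)
    have hc₂ : c x₂ = g' ((k₂ : B' ⧸ b.range).out) := Classical.choose_spec (hx k₂)
    have hh : h (x₁ - x₂) = 0 := by
      have : h x₁ = h x₂ := congrArg Subtype.val hk
      rw [map_sub, this, sub_self]
    obtain ⟨y, hy⟩ := (hexC (x₁ - x₂)).mp hh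
    -- g y = x₁ - x₂
    have hgy : g' (((k₁ : B' ⧸ b.range).out - (k₂ : B' ⧸ b.range).out) - b y) = 0 := by
      have h1 : c (g y) = g' (b y) := comm₂ y
      rw [hy, map_sub, hc₁, hc₂] at h1
      rw [map_sub, map_sub, ← h1, sub_self]
    obtain ⟨a', ha'⟩ := (hexB' _).mp hgy
    -- f' a' = out k₁ - out k₂ - b y
    refine ⟨QuotientAddGroup.mk a', ?_⟩
    have : (ι (QuotientAddGroup.mk a') : B' ⧸ b.range) = QuotientAddGroup.mk (f' a') := rfl
    rw [this, ha']
    have hout₁ : QuotientAddGroup.mk ((k₁ : B' ⧸ b.range).out) = (k₁ : B' ⧸ b.range) :=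
      QuotientAddGroup.out_eq' _
    have hout₂ : QuotientAddGroup.mk ((k₂ : B' ⧸ b.range).out) = (k₂ : B' ⧸ b.range) :=
      QuotientAddGroup.out_eq' _
    have hby : QuotientAddGroup.mk (b y) = (0 : B' ⧸ b.range) := by
      rw [QuotientAddGroup.eq_zero_iff]; exact ⟨y, rfl⟩
    push_cast [QuotientAddGroup.mk_sub] at *
    rw [hout₁, hout₂, hby, sub_zero]
  -- Step 2: coker b is finite, since φ has finite kernel and finite codomain
  have hkfin : ((φ.ker : Set (B' ⧸ b.range))).Finite := by
    haveI := hkerφ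
    exact Set.toFinite _
  refine aux_finite_of_fibers (⇑φ) (φ.ker : Set (B' ⧸ b.range)) hkfin ?_
  intro g₁ g₂ hgg
  have : φ (g₁ - g₂) = 0 := by rw [map_sub, hgg, sub_self]
  exact this
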